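/- Let V be a commutative ring, I an idempotent ideal with Ĩ = I ⊗_V I flat, and M, N V-modules. Then the multiplication map (Ĩ ⊗_V M) ⊗_V (Ĩ ⊗_V N) → Ĩ ⊗_V (M ⊗_V N) is an isomorphism; in particular the functor Ĩ ⊗_V (−) is lax monoidal up to natural isomorphism on the subcategory of firm modules. -/

import Mathlib

open TensorProduct

/-- The multiplication map `Ĩ = I ⊗[V] I → V` induced by the inclusion. -/
noncomputable def idealMul {V : Type} [CommRing V] (I : Ideal V) :
    (↥I ⊗[V] ↥I) →ₗ[V] V :=
  TensorProduct.lift (((LinearMap.mul V V).comp I.subtype).compl₂ I.subtype)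

/-- The multiplication `Ĩ ⊗ Ĩ → Ĩ`, `x ⊗ y ↦ (idealMul y) • x`. -/
noncomputable def tildeMul {V : Type} [CommRing V] (I : Ideal V) :
    ((↥I ⊗[V] ↥I) ⊗[V] (↥I ⊗[V] ↥I)) →ₗ[V] (↥I ⊗[V] ↥I) :=
  TensorProduct.lift
    (((LinearMap.lsmul V (↥I ⊗[V] ↥I)).comp (idealMul I)).flip)

section Aux

variable {V : Type} [CommRing V] (I : Ideal V)

/-- The action map `I ⊗ Ĩ → Ĩ`. -/
noncomputable def actMap : (↥I ⊗[V] (↥I ⊗[V] ↥I)) →ₗ[V] (↥I ⊗[V] ↥I) :=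
  TensorProduct.lift ((LinearMap.lsmul V (↥I ⊗[V] ↥I)).comp I.subtype)

lemma actMap_tmul (i : ↥I) (x : ↥I ⊗[V] ↥I) : actMap I (i ⊗ₜ x) = (i : V) • x := rfl

lemma actMap_injective (hflat : Module.Flat V (↥I ⊗[V] ↥I)) :
    Function.Injective (actMap I) := by
  have h := (Module.Flat.iff_rTensor_injective').mp hflat I
  have hfac : actMap I =
      (TensorProduct.lid V (↥I ⊗[V] ↥I)).toLinearMap ∘ₗ
        LinearMap.rTensor (↥I ⊗[V] ↥I) I.subtype := by
    apply TensorProduct.ext'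
    intro i x
    simp [actMap]
  rw [hfac]
  exact (TensorProduct.lid V (↥I ⊗[V] ↥I)).injective.comp h

lemma actMap_surjective (hI : I * I = I) : Function.Surjective (actMap I) := by
  have key : ∀ (a : ↥I) (r : V) (hr : r ∈ I * I),
      a ⊗ₜ[V] (⟨r, hI ▸ hr⟩ : ↥I) ∈ LinearMap.range (actMap I) := by
    intro a r hr
    induction hr using Submodule.mul_induction_on' with
    | mem_mul_mem c hc d hd =>
      refine ⟨(⟨c, hc⟩ : ↥I) ⊗ₜ (a ⊗ₜ (⟨d, hd⟩ : ↥I)), ?_⟩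
      rw [actMap_tmul, ← TensorProduct.tmul_smul]
      congr 1
    | add x hx y hy ihx ihy =>
      have : (⟨x + y, hI ▸ add_mem hx hy⟩ : ↥I) =
          (⟨x, hI ▸ hx⟩ : ↥I) + (⟨y, hI ▸ hy⟩ : ↥I) := rfl
      rw [this, TensorProduct.tmul_add]
      exact Submodule.add_mem _ ihx ihy
  rw [← LinearMap.range_eq_top, eq_top_iff]
  rintro z -
  induction z using TensorProduct.induction_on with
  | zero => exact Submodule.zero_mem _
  | add x y hx hy => exact Submodule.add_mem _ hx hy
  | tmul a b => exact key a b.1 (hI.ge b.2)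

end Aux

section Main

variable {V : Type} [CommRing V] (I : Ideal V)

/-- `actMap` as an equiv, under the hypotheses. -/
noncomputable def actEquiv (hI : I * I = I) (hflat : Module.Flat V (↥I ⊗[V] ↥I)) :
    (↥I ⊗[V] (↥I ⊗[V] ↥I)) ≃ₗ[V] (↥I ⊗[V] ↥I) :=
  LinearEquiv.ofBijective (actMap I) ⟨actMap_injective I hflat, actMap_surjective I hI⟩

noncomputable def tildeEquiv (hI : I * I = I) (hflat : Module.Flat V (↥I ⊗[V] ↥I)) :
    ((↥I ⊗[V] ↥I) ⊗[V] (↥I ⊗[V] ↥I)) ≃ₗ[V] (↥I ⊗[V] ↥I) :=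
  (TensorProduct.comm V _ _) ≪≫ₗ (TensorProduct.assoc V ↥I ↥I (↥I ⊗[V] ↥I)) ≪≫ₗ
    (TensorProduct.congr (LinearEquiv.refl V ↥I) (actEquiv I hI hflat)) ≪≫ₗ
    (actEquiv I hI hflat)

set_option synthInstance.maxHeartbeats 1000000 in
set_option maxHeartbeats 1000000 in
lemma tildeMul_eq (hI : I * I = I) (hflat : Module.Flat V (↥I ⊗[V] ↥I)) :
    tildeMul I = (tildeEquiv I hI hflat).toLinearMap := by
  apply TensorProduct.ext'
  intro w t
  induction w using TensorProduct.induction_on with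
  | zero => rw [TensorProduct.zero_tmul, map_zero, map_zero]
  | add p q hp hq =>
    rw [TensorProduct.add_tmul, map_add, map_add, hp, hq]
  | tmul a b =>
    induction t using TensorProduct.induction_on with
    | zero => rw [TensorProduct.tmul_zero, map_zero, map_zero]
    | add p q hp hq =>
      rw [TensorProduct.tmul_add, map_add, map_add, hp, hq]
    | tmul x y =>
      simp only [tildeMul, idealMul, TensorProduct.lift.tmul, LinearMap.flip_apply,
        LinearMap.comp_apply, LinearMap.lsmul_apply, LinearMap.compl₂_apply,
        LinearMap.mul_apply', Submodule.coe_subtype, LinearEquiv.coe_coe, tildeEquiv,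
        LinearEquiv.trans_apply, TensorProduct.comm_tmul, TensorProduct.assoc_tmul,
        TensorProduct.congr_tmul, LinearEquiv.refl_apply, actEquiv,
        LinearEquiv.ofBijective_apply, actMap_tmul, smul_smul]
      show _ = actMap I (x ⊗ₜ[V] actMap I (y ⊗ₜ[V] (a ⊗ₜ[V] b)))
      rw [actMap_tmul, actMap_tmul, smul_smul]

end Main

/-- the multiplication map
`(Ĩ ⊗ M) ⊗ (Ĩ ⊗ N) → Ĩ ⊗ (M ⊗ N)` is an isomorphism; in particular
`Ĩ ⊗ (−)` is lax monoidal up to natural isomorphism on firm modules. -/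
theorem tilde_tensor_lax_monoidal
    {V : Type} [CommRing V] (I : Ideal V) (hI : I * I = I)
    (hflat : Module.Flat V (↥I ⊗[V] ↥I))
    (M N : Type) [AddCommGroup M] [Module V M] [AddCommGroup N] [Module V N] :
    Function.Bijective
      ((TensorProduct.map (tildeMul I) (LinearMap.id : (M ⊗[V] N) →ₗ[V] (M ⊗[V] N))) ∘ₗ
        (TensorProduct.tensorTensorTensorComm V (↥I ⊗[V] ↥I) M (↥I ⊗[V] ↥I) N).toLinearMap) := by
  have h1 : TensorProduct.map (tildeMul I) (LinearMap.id : (M ⊗[V] N) →ₗ[V] (M ⊗[V] N)) =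
      (TensorProduct.congr (tildeEquiv I hI hflat) (LinearEquiv.refl V (M ⊗[V] N))).toLinearMap := by
    rw [tildeMul_eq I hI hflat]; rfl
  rw [LinearMap.coe_comp, h1]
  exact (TensorProduct.congr (tildeEquiv I hI hflat) (LinearEquiv.refl V (M ⊗[V] N))).bijective.comp
    (TensorProduct.tensorTensorTensorComm V (↥I ⊗[V] ↥I) M (↥I ⊗[V] ↥I) N).bijective
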